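/- Assume the alternating-minimization framework, and assume F and G are 0-separable, i.e. ⟨f₁ − f₂, g₁ − g₂⟩ = 0 for all f₁, f₂ ∈ F and g₁, g₂ ∈ G. Let (f̂, ĝ) be a joint minimizer and let (f_m, g_m), m ≥ 1, be alternating-minimization iterates. Then f_m = f̂ for every m ≥ 1 and g_m = ĝ for every m ≥ 2; that is, the algorithm converges exactly after at most two iterations. (The paper's claim that for orthogonal classes a few iterations of the algorithm suffice.) -/
import Mathlib
open RealInnerProductSpace

/-- uniqueness of minimizer of strongly convex objective -/
lemma altMin_unique_min {H : Type*} [NormedAddCommGroup H] [InnerProductSpace ℝ H]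
    {S : Set H} (hS : Convex ℝ S) {L : H → ℝ} (hL : ConvexOn ℝ S L) (c : H)
    {a b : H} (ha : a ∈ S) (hb : b ∈ S)
    (hma : ∀ x ∈ S, ‖c - a‖ ^ 2 + L a ≤ ‖c - x‖ ^ 2 + L x)
    (hmb : ∀ x ∈ S, ‖c - b‖ ^ 2 + L b ≤ ‖c - x‖ ^ 2 + L x) : a = b := by
  set m := (1/2 : ℝ) • a + (1/2 : ℝ) • b with hmdef
  have hm : m ∈ S := hS ha hb (by norm_num) (by norm_num) (by norm_num)
  have hLm : L m ≤ (1/2) * L a + (1/2) * L b :=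
    hL.2 ha hb (by norm_num) (by norm_num) (by norm_num)
  have hcm : c - m = (1/2 : ℝ) • ((c - a) + (c - b)) := by
    rw [hmdef]; module
  have hnorm : ‖c - m‖ ^ 2 = (1/4) * ‖(c - a) + (c - b)‖ ^ 2 := by
    rw [hcm, norm_smul, Real.norm_eq_abs, abs_of_nonneg (by norm_num : (0:ℝ) ≤ 1/2)]
    ring
  have hpar := norm_add_sq_real (c - a) (c - b)
  have hd := norm_sub_sq_real (c - a) (c - b)
  have hba : ‖(c - a) - (c - b)‖ ^ 2 = ‖b - a‖ ^ 2 := by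
    rw [show (c - a) - (c - b) = b - a by abel]
  have h1 := hma m hm
  have h2 := hmb m hm
  have hle : ‖b - a‖ ^ 2 ≤ 0 := by nlinarith
  have : b - a = 0 := by
    have := sq_nonneg ‖b - a‖
    have hz : ‖b - a‖ ^ 2 = 0 := le_antisymm hle this
    simpa [pow_eq_zero_iff] using hz
  have := sub_eq_zero.mp this
  exact this.symm

/-- difference of objectives in f is independent of the orthogonal g-component -/
lemma altMin_shift {H : Type*} [NormedAddCommGroup H] [InnerProductSpace ℝ H]
    (y a b g₁ g₂ : H) (h : ⟪a - b, g₁ - g₂⟫ = 0) :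
    ‖y - a - g₁‖ ^ 2 - ‖y - b - g₁‖ ^ 2 = ‖y - a - g₂‖ ^ 2 - ‖y - b - g₂‖ ^ 2 := by
  have hba : ⟪b - a, g₁ - g₂⟫ = 0 := by
    rw [show b - a = -(a - b) by abel, inner_neg_left, h, neg_zero]
  have key : ⟪y - a - g₂, g₁ - g₂⟫ = ⟪y - b - g₂, g₁ - g₂⟫ := by
    have e : y - a - g₂ = (y - b - g₂) + (b - a) := by abel
    rw [e, inner_add_left, hba, add_zero]
  have e1 : y - a - g₁ = (y - a - g₂) - (g₁ - g₂) := by abel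
  have e2 : y - b - g₁ = (y - b - g₂) - (g₁ - g₂) := by abel
  rw [e1, e2, norm_sub_sq_real (y - a - g₂) (g₁ - g₂), norm_sub_sq_real (y - b - g₂) (g₁ - g₂)]
  linarith [key]

/-- For orthogonal (`0`-separable) classes, the alternating-minimization algorithm
converges exactly after at most two iterations. -/
theorem altMin_orthogonal_exact_convergence
    {H : Type*} [NormedAddCommGroup H] [InnerProductSpace ℝ H]
    (F G : Set H) (hF : Convex ℝ F) (hG : Convex ℝ G)
    (y : H) (Lf Lg : H → ℝ)
    (hLf : ConvexOn ℝ F Lf) (hLg : ConvexOn ℝ G Lg)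
    (horth : ∀ f₁ ∈ F, ∀ f₂ ∈ F, ∀ g₁ ∈ G, ∀ g₂ ∈ G,
      ⟪f₁ - f₂, g₁ - g₂⟫ = 0)
    (fhat ghat : H) (hfhatF : fhat ∈ F) (hghatG : ghat ∈ G)
    (hmin : ∀ f ∈ F, ∀ g ∈ G,
      ‖y - fhat - ghat‖ ^ 2 + Lf fhat + Lg ghat ≤ ‖y - f - g‖ ^ 2 + Lf f + Lg g)
    (f g : ℕ → H) (hf0 : f 0 ∈ F)
    (hfF : ∀ m, 1 ≤ m → f m ∈ F) (hgG : ∀ m, 1 ≤ m → g m ∈ G)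
    (hgstep : ∀ m, 1 ≤ m → ∀ g' ∈ G,
      ‖y - f (m - 1) - g m‖ ^ 2 + Lg (g m) ≤ ‖y - f (m - 1) - g'‖ ^ 2 + Lg g')
    (hfstep : ∀ m, 1 ≤ m → ∀ f' ∈ F,
      ‖y - f m - g m‖ ^ 2 + Lf (f m) ≤ ‖y - f' - g m‖ ^ 2 + Lf f') :
    (∀ m, 1 ≤ m → f m = fhat) ∧ (∀ m, 2 ≤ m → g m = ghat) := by
  have Hf : ∀ m, 1 ≤ m → f m = fhat := by
    intro m hm
    have hfmF := hfF m hm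
    have hgmG := hgG m hm
    have hA : ∀ x ∈ F, ‖(y - ghat) - fhat‖ ^ 2 + Lf fhat ≤ ‖(y - ghat) - x‖ ^ 2 + Lf x := by
      intro x hx
      have h := hmin x hx ghat hghatG
      have e1 : y - ghat - fhat = y - fhat - ghat := by abel
      have e2 : y - ghat - x = y - x - ghat := by abel
      rw [e1, e2]; linarith
    have hB : ∀ x ∈ F, ‖(y - ghat) - f m‖ ^ 2 + Lf (f m) ≤ ‖(y - ghat) - x‖ ^ 2 + Lf x := by
      intro x hx
      have hstep := hfstep m hm x hx
      have hsh := altMin_shift y (f m) x (g m) ghat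
        (horth (f m) hfmF x hx (g m) hgmG ghat hghatG)
      have e1 : y - ghat - f m = y - f m - ghat := by abel
      have e2 : y - ghat - x = y - x - ghat := by abel
      rw [e1, e2]; linarith
    exact (altMin_unique_min hF hLf (y - ghat) hfhatF hfmF hA hB).symm
  refine ⟨Hf, ?_⟩
  intro m hm2
  have hm1 : 1 ≤ m := le_trans one_le_two hm2
  have hfprev : f (m - 1) = fhat := Hf (m - 1) (by omega)
  have hgmG := hgG m hm1
  have hA : ∀ x ∈ G, ‖(y - fhat) - ghat‖ ^ 2 + Lg ghat ≤ ‖(y - fhat) - x‖ ^ 2 + Lg x := by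
    intro x hx
    have h := hmin fhat hfhatF x hx
    linarith
  have hB : ∀ x ∈ G, ‖(y - fhat) - g m‖ ^ 2 + Lg (g m) ≤ ‖(y - fhat) - x‖ ^ 2 + Lg x := by
    intro x hx
    have h := hgstep m hm1 x hx
    rw [hfprev] at h
    linarith
  exact (altMin_unique_min hG hLg (y - fhat) hghatG hgmG hA hB).symm
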